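/- Let G be a finite simple graph, k a positive integer, and let S and T be two vertex covers of G with S ∩ T = ∅, each of size at most k. Let Ḡ be the graph obtained from G by cliquifying S and then cliquifying T. Then the following are equivalent: (i) there exists a reconfiguration sequence from S to T in R_k(G); (ii) there exists a monotone reconfiguration sequence from S to T in R_k(G); (iii) Ḡ has a path decomposition of width at most k − 1. -/

import Mathlib

/-- A set of vertices is a vertex cover of `G` if it contains at least one
endpoint of every edge. -/
def IsVC {α : Type*} (G : SimpleGraph α) (S : Finset α) : Prop :=
  ∀ ⦃u v : α⦄, G.Adj u v → u ∈ S ∨ v ∈ S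

/-- A reconfiguration sequence in `R_k(G)` from `S` to `T`: a sequence
`Q 0 = S, …, Q t = T` of vertex covers of `G`, each of size at most `k`,
such that consecutive sets have symmetric difference of size exactly one. -/
def ReconfSeq {α : Type*} [DecidableEq α] (G : SimpleGraph α) (k : ℕ) (S T : Finset α)
    (t : ℕ) (Q : ℕ → Finset α) : Prop :=
  Q 0 = S ∧ Q t = T ∧ (∀ i ≤ t, IsVC G (Q i) ∧ (Q i).card ≤ k) ∧
    ∀ i < t, (symmDiff (Q i) (Q (i + 1))).card = 1

/-- A reconfiguration sequence is monotone if every vertex changes its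
membership at most once over the whole sequence. -/
def MonotoneSeq {α : Type*} [DecidableEq α] (t : ℕ) (Q : ℕ → Finset α) : Prop :=
  ∀ v : α, ((Finset.range t).filter (fun i => v ∈ symmDiff (Q i) (Q (i + 1)))).card ≤ 1

/-- Cliquifying a vertex subset `S` of `G`: add all missing edges between
vertices of `S`. -/
def cliquify {α : Type*} [DecidableEq α] (G : SimpleGraph α) (S : Finset α) :
    SimpleGraph α where
  Adj u v := (G.Adj u v ∨ (u ∈ S ∧ v ∈ S)) ∧ u ≠ v
  symm := by
    constructor
    intro u v h
    exact ⟨h.1.elim (fun h' => Or.inl h'.symm) (fun h' => Or.inr ⟨h'.2, h'.1⟩), h.2.symm⟩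
  loopless := by constructor; intro u h; exact h.2 rfl

/-- `B 0, …, B (p-1)` is a path decomposition of `G`. -/
structure PathDecomp {α : Type*} (G : SimpleGraph α) (p : ℕ) (B : ℕ → Finset α) : Prop where
  /-- every vertex lies in some bag -/
  mem_bag : ∀ v : α, ∃ i, i < p ∧ v ∈ B i
  /-- every edge is contained in some bag -/
  edge_bag : ∀ ⦃u v : α⦄, G.Adj u v → ∃ i, i < p ∧ u ∈ B i ∧ v ∈ B i
  /-- the bags containing a given vertex form a contiguous interval -/
  interval : ∀ (v : α) (i j l : ℕ), i ≤ j → j ≤ l → l < p → v ∈ B i → v ∈ B l → v ∈ B j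

set_option linter.unusedSectionVars false
set_option maxHeartbeats 1000000
namespace VCR

open Finset

variable {V : Type} [Fintype V] [DecidableEq V]

open Classical in
/-- neighbourhood of a vertex as a Finset -/
noncomputable def nbr (G : SimpleGraph V) (s : V) : Finset V :=
  Finset.univ.filter (fun v => G.Adj s v)

lemma mem_nbr {G : SimpleGraph V} {s v : V} : v ∈ nbr G s ↔ G.Adj s v := by
  classical
  simp [nbr]

/-- the key submodular quantity: |X| + #{s ∈ S : N(s) ⊄ X} -/
noncomputable def bnd (G : SimpleGraph V) (S : Finset V) (X : Finset V) : ℕ :=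
  X.card + (S.filter (fun s => ¬ nbr G s ⊆ X)).card

/-- good enumeration of T : the hub object -/
def GoodEnum (G : SimpleGraph V) (k : ℕ) (S T : Finset V) (E : List V) : Prop :=
  E.Nodup ∧ E.toFinset = T ∧ ∀ j < E.length, bnd G S (E.take j).toFinset < k

section structural

variable {G : SimpleGraph V} {k : ℕ} {S T : Finset V}

lemma edge_ST (hS : IsVC G S) (hT : IsVC G T) (hST : Disjoint S T) {u v : V}
    (h : G.Adj u v) : (u ∈ S ∧ v ∈ T) ∨ (v ∈ S ∧ u ∈ T) := by
  rcases hS h with h1 | h1 <;> rcases hT h with h2 | h2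
  · exact absurd h2 (Finset.disjoint_left.mp hST h1)
  · exact Or.inl ⟨h1, h2⟩
  · exact Or.inr ⟨h1, h2⟩
  · exact absurd h2 (Finset.disjoint_left.mp hST h1)

lemma nbr_subset_T (hS : IsVC G S) (hT : IsVC G T) (hST : Disjoint S T) {s : V}
    (hs : s ∈ S) : nbr G s ⊆ T := by
  intro v hv
  rcases edge_ST hS hT hST (mem_nbr.mp hv) with ⟨_, h2⟩ | ⟨_, h2⟩
  · exact h2
  · exact absurd h2 (Finset.disjoint_left.mp hST hs)

lemma gbar_adj {u v : V} :
    (cliquify (cliquify G S) T).Adj u v ↔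
      u ≠ v ∧ (G.Adj u v ∨ (u ∈ S ∧ v ∈ S) ∨ (u ∈ T ∧ v ∈ T)) := by
  constructor
  · rintro ⟨h1 | h1, hne⟩
    · exact ⟨hne, h1.1.imp id Or.inl⟩
    · exact ⟨hne, Or.inr (Or.inr h1)⟩
  · rintro ⟨hne, h | h | h⟩
    · exact ⟨Or.inl ⟨Or.inl h, hne⟩, hne⟩
    · exact ⟨Or.inl ⟨Or.inr h, hne⟩, hne⟩
    · exact ⟨Or.inr h, hne⟩

lemma step_cases {A B : Finset V} (h : (symmDiff A B).card = 1) :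
    (∃ x, x ∉ A ∧ B = insert x A) ∨ (∃ x, x ∈ A ∧ B = A.erase x) := by
  have hd : Disjoint (A \ B) (B \ A) := disjoint_sdiff_sdiff
  have hcard : (A \ B).card + (B \ A).card = 1 := by
    rw [← Finset.card_union_of_disjoint hd]
    simpa [symmDiff_def, Finset.sup_eq_union] using h
  rcases Nat.eq_zero_or_pos (A \ B).card with h0 | hpos
  · -- insert case
    left
    have hAB : A ⊆ B := by
      rw [Finset.card_eq_zero] at h0
      intro a ha
      by_contra hna
      exact absurd (Finset.mem_sdiff.mpr ⟨ha, hna⟩) (by simp [h0])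
    have h1 : (B \ A).card = 1 := by omega
    obtain ⟨x, hx⟩ := Finset.card_eq_one.mp h1
    have hxB : x ∈ B ∧ x ∉ A := by
      have : x ∈ B \ A := hx ▸ Finset.mem_singleton_self x
      exact Finset.mem_sdiff.mp this
    refine ⟨x, hxB.2, ?_⟩
    ext y
    simp only [Finset.mem_insert]
    constructor
    · intro hy
      by_cases hyA : y ∈ A
      · exact Or.inr hyA
      · left
        have : y ∈ B \ A := Finset.mem_sdiff.mpr ⟨hy, hyA⟩
        simpa [hx] using this
    · rintro (rfl | hy)
      · exact hxB.1
      · exact hAB hy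
  · -- erase case
    right
    have h1 : (A \ B).card = 1 := by omega
    have h0 : (B \ A).card = 0 := by omega
    have hBA : B ⊆ A := by
      rw [Finset.card_eq_zero] at h0
      intro a ha
      by_contra hna
      exact absurd (Finset.mem_sdiff.mpr ⟨ha, hna⟩) (by simp [h0])
    obtain ⟨x, hx⟩ := Finset.card_eq_one.mp h1
    have hxA : x ∈ A ∧ x ∉ B := by
      have : x ∈ A \ B := hx ▸ Finset.mem_singleton_self x
      exact Finset.mem_sdiff.mp this
    refine ⟨x, hxA.1, ?_⟩
    ext y
    simp only [Finset.mem_erase]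
    constructor
    · intro hy
      refine ⟨fun hyx => hxA.2 (hyx ▸ hy), hBA hy⟩
    · rintro ⟨hyx, hyA⟩
      by_contra hyB
      have : y ∈ A \ B := Finset.mem_sdiff.mpr ⟨hyA, hyB⟩
      rw [hx] at this
      exact hyx (Finset.mem_singleton.mp this)

lemma bnd_submod (G : SimpleGraph V) (S : Finset V) (X Y : Finset V) :
    bnd G S (X ∪ Y) + bnd G S (X ∩ Y) ≤ bnd G S X + bnd G S Y := by
  classical
  have hmod : (X ∪ Y).card + (X ∩ Y).card = X.card + Y.card :=
    Finset.card_union_add_card_inter X Y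
  have h1 : S.filter (fun s => ¬ nbr G s ⊆ X ∪ Y) ⊆
      (S.filter (fun s => ¬ nbr G s ⊆ X)) ∩ (S.filter (fun s => ¬ nbr G s ⊆ Y)) := by
    intro s hs
    simp only [Finset.mem_filter] at hs
    simp only [Finset.mem_inter, Finset.mem_filter]
    refine ⟨⟨hs.1, fun hsub => hs.2 (hsub.trans Finset.subset_union_left)⟩,
      ⟨hs.1, fun hsub => hs.2 (hsub.trans Finset.subset_union_right)⟩⟩
  have h2 : S.filter (fun s => ¬ nbr G s ⊆ X ∩ Y) ⊆
      (S.filter (fun s => ¬ nbr G s ⊆ X)) ∪ (S.filter (fun s => ¬ nbr G s ⊆ Y)) := by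
    intro s hs
    simp only [Finset.mem_filter] at hs
    simp only [Finset.mem_union, Finset.mem_filter]
    by_cases hX : nbr G s ⊆ X
    · refine Or.inr ⟨hs.1, fun hY => hs.2 ?_⟩
      exact Finset.subset_inter hX hY
    · exact Or.inl ⟨hs.1, hX⟩
  have h1' := Finset.card_le_card h1
  have h2' := Finset.card_le_card h2
  have hfmod := Finset.card_union_add_card_inter
    (S.filter (fun s => ¬ nbr G s ⊆ X)) (S.filter (fun s => ¬ nbr G s ⊆ Y))
  unfold bnd
  omega

end structural

section crusade

variable {G : SimpleGraph V} {k : ℕ} {S T : Finset V}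

/-- strong crusade -/
def Strong (G : SimpleGraph V) (S : Finset V) (k : ℕ) (T : Finset V)
    (n : ℕ) (D : ℕ → Finset V) : Prop :=
  D n = T ∧ ∀ r < n, D r ⊆ T ∧ (D (r+1) \ D r).card ≤ 1 ∧ bnd G S (D r) < k

noncomputable def meas (G : SimpleGraph V) (S : Finset V) (Tc : ℕ)
    (n : ℕ) (D : ℕ → Finset V) : ℕ :=
  (n * Tc + n + Tc + 1) * (∑ r ∈ Finset.range (n+1), bnd G S (D r))
    + ∑ r ∈ Finset.range (n+1), (D r).card

lemma improve {n : ℕ} {D : ℕ → Finset V} (hst : Strong G S k T n D) (h0 : D 0 = ∅)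
    (hnm : ¬ ∀ r < n, D r ⊆ D (r+1)) :
    ∃ D', Strong G S k T n D' ∧ D' 0 = ∅ ∧
      meas G S T.card n D' < meas G S T.card n D := by
  push_neg at hnm
  obtain ⟨r, hr, hns⟩ := hnm
  have hr0 : r ≠ 0 := by
    intro h; subst h; exact hns (by simp [h0])
  have hrn : r + 1 < n := by
    rcases Nat.lt_or_ge (r+1) n with h | h
    · exact h
    · exfalso
      have he : r + 1 = n := by omega
      exact hns (by rw [he, hst.1]; exact (hst.2 r hr).1)
  have key : ∀ (f : Finset V → ℕ) (X : Finset V) (j : ℕ), j ∈ Finset.range (n+1) →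
      ∑ i ∈ Finset.range (n+1), f (Function.update D j X i)
        = (∑ i ∈ (Finset.range (n+1)).erase j, f (D i)) + f X := by
    intro f X j hj
    rw [← Finset.sum_erase_add _ _ hj]
    congr 1
    · apply Finset.sum_congr rfl
      intro i hi
      rw [Function.update_of_ne (Finset.ne_of_mem_erase hi)]
    · rw [Function.update_self]
  have key2 : ∀ (f : Finset V → ℕ) (j : ℕ), j ∈ Finset.range (n+1) →
      ∑ i ∈ Finset.range (n+1), f (D i)
        = (∑ i ∈ (Finset.range (n+1)).erase j, f (D i)) + f (D j) :=
    fun f j hj => (Finset.sum_erase_add _ _ hj).symm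
  have hrmem : r ∈ Finset.range (n+1) := Finset.mem_range.mpr (by omega)
  have hr1mem : r + 1 ∈ Finset.range (n+1) := Finset.mem_range.mpr (by omega)
  by_cases hb : bnd G S (D r ∩ D (r+1)) ≤ bnd G S (D r)
  · -- transformation 1 : shrink D r
    refine ⟨Function.update D r (D r ∩ D (r+1)), ⟨?_, ?_⟩, ?_, ?_⟩
    · rw [Function.update_of_ne (by omega : n ≠ r)]; exact hst.1
    · intro r' hr'
      obtain ⟨h1, h2, h3⟩ := hst.2 r' hr'
      by_cases e1 : r' = r
      · subst e1
        rw [Function.update_self, Function.update_of_ne (by omega : r' + 1 ≠ r')]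
        refine ⟨(Finset.inter_subset_left).trans h1, ?_, lt_of_le_of_lt hb h3⟩
        have he : D (r'+1) \ (D r' ∩ D (r'+1)) = D (r'+1) \ D r' := by
          ext x; simp only [Finset.mem_sdiff, Finset.mem_inter]; tauto
        rw [he]; exact h2
      · by_cases e2 : r' + 1 = r
        · rw [Function.update_of_ne e1, e2, Function.update_self]
          refine ⟨h1, ?_, h3⟩
          have hsub : (D r ∩ D (r+1)) \ D r' ⊆ D r \ D r' :=
            Finset.sdiff_subset_sdiff Finset.inter_subset_left (le_refl _)
          have h2' : (D r \ D r').card ≤ 1 := by rw [← e2]; exact h2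
          exact le_trans (Finset.card_le_card hsub) h2'
        · rw [Function.update_of_ne e1, Function.update_of_ne e2]
          exact ⟨h1, h2, h3⟩
    · rw [Function.update_of_ne (Ne.symm hr0)]; exact h0
    · unfold meas
      have hc : (D r ∩ D (r+1)).card < (D r).card := by
        apply Finset.card_lt_card
        rw [Finset.ssubset_iff_subset_ne]
        refine ⟨Finset.inter_subset_left, ?_⟩
        intro h
        exact hns (fun y hy => (Finset.mem_inter.mp (h ▸ hy)).2)
      have e1 := key (bnd G S) (D r ∩ D (r+1)) r hrmem
      have e2 := key2 (bnd G S) r hrmem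
      have e3 := key (fun X => X.card) (D r ∩ D (r+1)) r hrmem
      have e4 := key2 (fun X => X.card) r hrmem
      rw [e1, e2, e3, e4]
      have hb1 : (∑ i ∈ (Finset.range (n+1)).erase r, bnd G S (D i)) + bnd G S (D r ∩ D (r+1))
          ≤ (∑ i ∈ (Finset.range (n+1)).erase r, bnd G S (D i)) + bnd G S (D r) := by omega
      have hW := Nat.mul_le_mul_left (n * T.card + n + T.card + 1) hb1
      omega
  · -- transformation 2 : grow D (r+1)
    push_neg at hb
    have hsubm := bnd_submod G S (D r) (D (r+1))
    obtain ⟨hT1, hC1, hB1⟩ := hst.2 r hr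
    obtain ⟨hT2, hC2, hB2⟩ := hst.2 (r+1) hrn
    have hUlt : bnd G S (D r ∪ D (r+1)) < bnd G S (D (r+1)) := by omega
    refine ⟨Function.update D (r+1) (D r ∪ D (r+1)), ⟨?_, ?_⟩, ?_, ?_⟩
    · rw [Function.update_of_ne (by omega : n ≠ r + 1)]; exact hst.1
    · intro r' hr'
      obtain ⟨h1, h2, h3⟩ := hst.2 r' hr'
      by_cases e1 : r' = r + 1
      · subst e1
        rw [Function.update_self, Function.update_of_ne (by omega : r + 1 + 1 ≠ r + 1)]
        refine ⟨Finset.union_subset hT1 hT2, ?_, lt_trans hUlt hB2⟩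
        exact le_trans (Finset.card_le_card (Finset.sdiff_subset_sdiff (le_refl _)
          Finset.subset_union_right)) h2
      · by_cases e2 : r' = r
        · subst e2
          rw [Function.update_of_ne e1, Function.update_self]
          refine ⟨h1, ?_, h3⟩
          have he : (D r' ∪ D (r'+1)) \ D r' = D (r'+1) \ D r' := by
            ext x; simp only [Finset.mem_sdiff, Finset.mem_union]; tauto
          rw [he]; exact h2
        · rw [Function.update_of_ne e1,
            Function.update_of_ne (by omega : r' + 1 ≠ r + 1)]
          exact ⟨h1, h2, h3⟩
    · rw [Function.update_of_ne (by omega : (0:ℕ) ≠ r + 1)]; exact h0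
    · unfold meas
      have hcU : (D r ∪ D (r+1)).card ≤ T.card :=
        Finset.card_le_card (Finset.union_subset hT1 hT2)
      have e1 := key (bnd G S) (D r ∪ D (r+1)) (r+1) hr1mem
      have e2 := key2 (bnd G S) (r+1) hr1mem
      have e3 := key (fun X => X.card) (D r ∪ D (r+1)) (r+1) hr1mem
      have e4 := key2 (fun X => X.card) (r+1) hr1mem
      rw [e1, e2, e3, e4]
      have hb1 : ((∑ i ∈ (Finset.range (n+1)).erase (r+1), bnd G S (D i))
            + bnd G S (D r ∪ D (r+1))) + 1
          ≤ (∑ i ∈ (Finset.range (n+1)).erase (r+1), bnd G S (D i))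
            + bnd G S (D (r+1)) := by omega
      have hW := Nat.mul_le_mul_left (n * T.card + n + T.card + 1) hb1
      rw [Nat.mul_add, Nat.mul_one] at hW
      omega

lemma monotonize_aux : ∀ (fuel n : ℕ) (D : ℕ → Finset V),
    meas G S T.card n D ≤ fuel → Strong G S k T n D → D 0 = ∅ →
    ∃ D', Strong G S k T n D' ∧ D' 0 = ∅ ∧ ∀ r < n, D' r ⊆ D' (r+1) := by
  intro fuel
  induction fuel with
  | zero =>
    intro n D hm hst h0
    by_cases h : ∀ r < n, D r ⊆ D (r+1)
    · exact ⟨D, hst, h0, h⟩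
    · obtain ⟨D', _, _, hlt⟩ := improve hst h0 h
      omega
  | succ fuel ih =>
    intro n D hm hst h0
    by_cases h : ∀ r < n, D r ⊆ D (r+1)
    · exact ⟨D, hst, h0, h⟩
    · obtain ⟨D', hst', h0', hlt⟩ := improve hst h0 h
      exact ih n D' (by omega) hst' h0'

lemma monotonize {n : ℕ} {D : ℕ → Finset V} (hst : Strong G S k T n D) (h0 : D 0 = ∅) :
    ∃ D', Strong G S k T n D' ∧ D' 0 = ∅ ∧ ∀ r < n, D' r ⊆ D' (r+1) :=
  monotonize_aux (meas G S T.card n D) n D (le_refl _) hst h0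

/-- weak crusade -/
def Weak (G : SimpleGraph V) (S : Finset V) (k : ℕ) (T : Finset V)
    (n : ℕ) (D : ℕ → Finset V) : Prop :=
  D n = T ∧ ∀ r < n, D r ⊆ T ∧
    (D (r+1) ⊆ D r ∨ (bnd G S (D r) < k ∧ ∃ x, x ∉ D r ∧ D (r+1) = insert x (D r)))

lemma weak_to_strong : ∀ (n : ℕ) (D : ℕ → Finset V), Weak G S k T n D →
    ∃ m D', Strong G S k T m D' ∧ D' 0 ⊆ D 0 := by
  intro n
  induction n with
  | zero =>
    intro D hD
    exact ⟨0, fun _ => T, ⟨rfl, by omega⟩, by rw [← hD.1]⟩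
  | succ n ih =>
    intro D hD
    obtain ⟨m, D2, hst2, h02⟩ := ih (fun r => D (r+1))
      ⟨hD.1, fun r hr => hD.2 (r+1) (by omega)⟩
    rcases (hD.2 0 (Nat.succ_pos n)).2 with hsub | ⟨hbnd, x, hx, hins⟩
    · exact ⟨m, D2, hst2, h02.trans hsub⟩
    · refine ⟨m + 1, fun r => if r = 0 then D 0 else D2 (r - 1), ⟨?_, ?_⟩, by simp⟩
      · simp only [Nat.add_eq_zero, and_false, if_false]
        simpa using hst2.1
      · intro r hr
        rcases Nat.eq_zero_or_pos r with rfl | hrpos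
        · simp only [if_pos rfl, if_neg (Nat.one_ne_zero)]
          refine ⟨(hD.2 0 (Nat.succ_pos n)).1, ?_, hbnd⟩
          have : D2 0 \ D 0 ⊆ {x} := by
            intro y hy
            rw [Finset.mem_sdiff] at hy
            have := h02 hy.1
            rw [hins, Finset.mem_insert] at this
            rcases this with rfl | h
            · exact Finset.mem_singleton_self y
            · exact absurd h hy.2
          simpa using Finset.card_le_card this
        · obtain ⟨r', rfl⟩ := Nat.exists_eq_succ_of_ne_zero (Nat.pos_iff_ne_zero.mp hrpos)
          simp only [Nat.succ_ne_zero, if_false, Nat.succ_sub_one]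
          have := hst2.2 r' (by omega)
          simpa using this

lemma mono_step {A B : Finset V} (hsub : A ⊆ B) (hc : (B \ A).card ≤ 1) :
    B = A ∨ ∃ x, x ∉ A ∧ B = insert x A := by
  rcases Nat.eq_zero_or_pos (B \ A).card with h0 | hpos
  · left
    apply Finset.Subset.antisymm _ hsub
    intro y hy
    by_contra hn
    have : y ∈ B \ A := Finset.mem_sdiff.mpr ⟨hy, hn⟩
    rw [Finset.card_eq_zero] at h0
    simp [h0] at this
  · right
    have h1 : (B \ A).card = 1 := by omega
    obtain ⟨x, hx⟩ := Finset.card_eq_one.mp h1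
    have hx' : x ∈ B ∧ x ∉ A := by
      have : x ∈ B \ A := hx ▸ Finset.mem_singleton_self x
      exact Finset.mem_sdiff.mp this
    refine ⟨x, hx'.2, ?_⟩
    ext y
    simp only [Finset.mem_insert]
    constructor
    · intro hy
      by_cases hyA : y ∈ A
      · exact Or.inr hyA
      · left
        have : y ∈ B \ A := Finset.mem_sdiff.mpr ⟨hy, hyA⟩
        simpa [hx] using this
    · rintro (rfl | hy)
      · exact hx'.1
      · exact hsub hy

lemma good_of_mono : ∀ (n : ℕ) (D : ℕ → Finset V), Strong G S k T n D →
    (∀ r < n, D r ⊆ D (r+1)) →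
    ∃ E : List V, E.Nodup ∧ (∀ x ∈ E, x ∉ D 0) ∧ D 0 ∪ E.toFinset = T ∧
      ∀ j < E.length, bnd G S (D 0 ∪ (E.take j).toFinset) < k := by
  intro n
  induction n with
  | zero =>
    intro D hst _
    exact ⟨[], List.nodup_nil, by simp, by simpa using hst.1, by simp⟩
  | succ n ih =>
    intro D hst hmono
    obtain ⟨E', h1, h2, h3, h4⟩ := ih (fun r => D (r+1))
      ⟨hst.1, fun r hr => hst.2 (r+1) (by omega)⟩
      (fun r hr => hmono (r+1) (by omega))
    rcases mono_step (hmono 0 (Nat.succ_pos n)) (hst.2 0 (Nat.succ_pos n)).2.1 with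
      heq | ⟨x, hx, hins⟩
    · exact ⟨E', h1, fun y hy => heq ▸ h2 y hy, heq ▸ h3, fun j hj => heq ▸ h4 j hj⟩
    · refine ⟨x :: E', ?_, ?_, ?_, ?_⟩
      · refine List.nodup_cons.mpr ⟨fun hmem => ?_, h1⟩
        exact h2 x hmem (hins ▸ Finset.mem_insert_self x (D 0))
      · intro y hy
        rcases List.mem_cons.mp hy with rfl | hy'
        · exact hx
        · intro hyD
          exact h2 y hy' (hins ▸ Finset.mem_insert_of_mem hyD)
      · rw [List.toFinset_cons, ← h3, hins]
        ext y
        simp only [Finset.mem_union, Finset.mem_insert, List.mem_toFinset]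
        tauto
      · intro j hj
        rcases Nat.eq_zero_or_pos j with rfl | hjpos
        · simpa using (hst.2 0 (Nat.succ_pos n)).2.2
        · obtain ⟨j', rfl⟩ : ∃ j'', j = j'' + 1 := ⟨j - 1, by omega⟩
          have heq : D 0 ∪ ((x :: E').take (j'+1)).toFinset
              = D 1 ∪ (E'.take j').toFinset := by
            rw [List.take_succ_cons, List.toFinset_cons, hins]
            ext y
            simp only [Finset.mem_union, Finset.mem_insert, List.mem_toFinset]
            tauto
          rw [heq]
          exact h4 j' (by simp only [List.length_cons] at hj; omega)

/-- from a reconfiguration sequence to a good enumeration -/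
lemma goodEnum_of_seq (hS : IsVC G S) (hT : IsVC G T) (hST : Disjoint S T)
    {t : ℕ} {Q : ℕ → Finset V} (hQ : ReconfSeq G k S T t Q) :
    ∃ E, GoodEnum G k S T E := by
  obtain ⟨hQ0, hQt, hQi, hQs⟩ := hQ
  -- the weak crusade of T-parts
  have hweak : Weak G S k T t (fun r => T ∩ Q r) := by
    refine ⟨?_, ?_⟩
    · show T ∩ Q t = T
      rw [hQt]; exact Finset.inter_self T
    intro r hr
    show T ∩ Q r ⊆ T ∧ (T ∩ Q (r+1) ⊆ T ∩ Q r ∨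
      (bnd G S (T ∩ Q r) < k ∧ ∃ x, x ∉ T ∩ Q r ∧ T ∩ Q (r+1) = insert x (T ∩ Q r)))
    refine ⟨Finset.inter_subset_left, ?_⟩
    rcases step_cases (hQs r hr) with ⟨x, hx, hins⟩ | ⟨x, hx, hers⟩
    · by_cases hxT : x ∈ T
      · right
        constructor
        · -- bnd bound
          have hfil : S.filter (fun s => ¬ nbr G s ⊆ T ∩ Q r) ⊆ S ∩ Q r := by
            intro s hs
            rw [Finset.mem_filter] at hs
            rw [Finset.mem_inter]
            refine ⟨hs.1, ?_⟩
            by_contra hsQ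
            apply hs.2
            intro v hv
            have hadj := mem_nbr.mp hv
            rw [Finset.mem_inter]
            refine ⟨nbr_subset_T hS hT hST hs.1 hv, ?_⟩
            rcases (hQi r (by omega)).1 hadj with h | h
            · exact absurd h hsQ
            · exact h
          have hdisj : Disjoint (T ∩ Q r) (S ∩ Q r) := by
            apply Finset.disjoint_left.mpr
            intro a ha hb
            exact Finset.disjoint_left.mp hST (Finset.mem_inter.mp hb).1
              (Finset.mem_inter.mp ha).1
          have hsub2 : (T ∩ Q r) ∪ (S ∩ Q r) ⊆ Q r := by
            intro y hy
            rcases Finset.mem_union.mp hy with h | h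
            · exact (Finset.mem_inter.mp h).2
            · exact (Finset.mem_inter.mp h).2
          have hcard : (T ∩ Q r).card + (S ∩ Q r).card ≤ (Q r).card := by
            rw [← Finset.card_union_of_disjoint hdisj]
            exact Finset.card_le_card hsub2
          have hQr1 : (Q (r+1)).card ≤ k := (hQi (r+1) (by omega)).2
          have hQins : (Q (r+1)).card = (Q r).card + 1 := by
            rw [hins]; exact Finset.card_insert_of_notMem hx
          have hfc := Finset.card_le_card hfil
          unfold bnd
          omega
        · refine ⟨x, fun hmem => hx (Finset.mem_inter.mp hmem).2, ?_⟩
          rw [hins]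
          ext y
          simp only [Finset.mem_inter, Finset.mem_insert]
          constructor
          · rintro ⟨hyT, rfl | hyQ⟩
            · exact Or.inl rfl
            · exact Or.inr ⟨hyT, hyQ⟩
          · rintro (rfl | ⟨hyT, hyQ⟩)
            · exact ⟨hxT, Or.inl rfl⟩
            · exact ⟨hyT, Or.inr hyQ⟩
      · left
        rw [hins]
        intro y hy
        rw [Finset.mem_inter] at hy ⊢
        rcases Finset.mem_insert.mp hy.2 with rfl | h
        · exact absurd hy.1 hxT
        · exact ⟨hy.1, h⟩
    · left
      rw [hers]
      intro y hy
      rw [Finset.mem_inter] at hy ⊢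
      exact ⟨hy.1, Finset.mem_of_mem_erase hy.2⟩
  obtain ⟨m, D', hst, h0sub⟩ := weak_to_strong t _ hweak
  have h0 : D' 0 = ∅ := by
    rw [← Finset.subset_empty]
    intro y hy
    have := h0sub hy
    rw [hQ0] at this
    exact absurd (Finset.mem_inter.mp this).1
      (Finset.disjoint_left.mp hST (Finset.mem_inter.mp this).2)
  obtain ⟨D'', hst'', h0'', hmono⟩ := monotonize hst h0
  obtain ⟨E, hnd, _, hunion, hpre⟩ := good_of_mono m D'' hst'' hmono
  rw [h0''] at hunion hpre
  refine ⟨E, hnd, by simpa using hunion, fun j hj => by simpa using hpre j hj⟩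

end crusade

section lists

variable {α : Type*}

lemma take_succ_ex : ∀ (l : List α) (i : ℕ), i < l.length →
    ∃ x, l.take (i+1) = l.take i ++ [x] ∧ x ∈ l ∧ (l.Nodup → x ∉ l.take i) := by
  intro l
  induction l with
  | nil => intro i hi; simp at hi
  | cons a l' ih =>
    intro i hi
    rcases Nat.eq_zero_or_pos i with rfl | hpos
    · exact ⟨a, by simp, List.mem_cons_self, fun _ => by simp⟩
    · obtain ⟨i', rfl⟩ : ∃ i'', i = i'' + 1 := ⟨i - 1, by omega⟩
      obtain ⟨x, hx1, hx2, hx3⟩ := ih i' (by simpa using hi)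
      refine ⟨x, by simp [hx1], List.mem_cons_of_mem a hx2, fun hnd => ?_⟩
      rw [List.take_succ_cons]
      intro hmem
      rcases List.mem_cons.mp hmem with rfl | h
      · exact (List.nodup_cons.mp hnd).1 hx2
      · exact hx3 (List.nodup_cons.mp hnd).2 h

lemma mem_take_mono {l : List α} {m n : ℕ} (hmn : m ≤ n) {x : α}
    (hx : x ∈ l.take m) : x ∈ l.take n := by
  have h1 : l.take m = (l.take n).take m := by
    rw [List.take_take, min_eq_left hmn]
  rw [h1] at hx
  exact (List.take_sublist m (l.take n)).subset hx

end lists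

section L2

variable {G : SimpleGraph V} {k : ℕ} {S T : Finset V}

noncomputable def avail (G : SimpleGraph V) (S : Finset V) (Y : Finset V) : Finset V :=
  S.filter (fun s => nbr G s ⊆ Y)

lemma avail_subset : avail G S Y ⊆ S := Finset.filter_subset _ _

lemma mem_avail {Y : Finset V} {s : V} : s ∈ avail G S Y ↔ s ∈ S ∧ nbr G s ⊆ Y :=
  Finset.mem_filter

lemma avail_mono {Y Y' : Finset V} (h : Y ⊆ Y') : avail G S Y ⊆ avail G S Y' := by
  intro s hs
  rw [mem_avail] at hs ⊢
  exact ⟨hs.1, hs.2.trans h⟩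

lemma sdiff_avail (G : SimpleGraph V) (S Y : Finset V) :
    S \ avail G S Y = S.filter (fun s => ¬ nbr G s ⊆ Y) := by
  ext s
  simp only [Finset.mem_sdiff, Finset.mem_filter, mem_avail]
  tauto

lemma bnd_eq (G : SimpleGraph V) (S Y : Finset V) :
    bnd G S Y = Y.card + (S \ avail G S Y).card := by
  rw [sdiff_avail]; rfl

lemma avail_T (hS : IsVC G S) (hT : IsVC G T) (hST : Disjoint S T) :
    avail G S T = S := by
  apply Finset.Subset.antisymm avail_subset
  intro s hs
  rw [mem_avail]
  exact ⟨hs, nbr_subset_T hS hT hST hs⟩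

noncomputable def go (G : SimpleGraph V) (S : Finset V) : List V → Finset V → List V
  | [], _ => []
  | τ :: rest, Y =>
      τ :: ((avail G S (insert τ Y) \ avail G S Y).toList
        ++ go G S rest (insert τ Y))

/-- master specification of `go` -/
lemma go_spec (hS : IsVC G S) (hT : IsVC G T) (hST : Disjoint S T) (hTk : T.card ≤ k) :
    ∀ (L : List V) (Y : Finset V), Y ⊆ T → L.Nodup → (∀ x ∈ L, x ∈ T ∧ x ∉ Y) →
    Y ∪ L.toFinset = T →
    (∀ j < L.length, bnd G S (Y ∪ (L.take j).toFinset) < k) →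
    (go G S L Y).Nodup
    ∧ (∀ x ∈ go G S L Y, (x ∈ L) ∨ (x ∈ S ∧ x ∉ avail G S Y))
    ∧ (go G S L Y).toFinset = L.toFinset ∪ (avail G S (Y ∪ L.toFinset) \ avail G S Y)
    ∧ (∀ i : ℕ,
        (∀ s ∈ avail G S Y ∪ (((go G S L Y).take i).toFinset ∩ S),
          nbr G s ⊆ Y ∪ (((go G S L Y).take i).toFinset ∩ T))
      ∧ (S \ (avail G S Y ∪ (((go G S L Y).take i).toFinset ∩ S))).card
          + (Y ∪ (((go G S L Y).take i).toFinset ∩ T)).card ≤ k) := by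
  intro L
  induction L with
  | nil =>
    intro Y hY _ _ hcov _
    have hYT : Y = T := by simpa using hcov
    subst hYT
    rw [avail_T hS hT hST]
    refine ⟨List.nodup_nil, by simp [go], by simp [go, avail_T hS hT hST], ?_⟩
    intro i
    simp only [go, List.take_nil, List.toFinset_nil, Finset.empty_inter,
      Finset.union_empty, Finset.sdiff_self, Finset.card_empty, Nat.zero_add]
    exact ⟨fun s hs => nbr_subset_T hS hT hST hs, hTk⟩
  | cons τ rest ih =>
    intro Y hY hnd hLT hcov hpre
    obtain ⟨hτT, hτY⟩ := hLT τ (List.mem_cons_self)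
    have hτS : τ ∉ S := fun h => Finset.disjoint_left.mp hST h hτT
    set Y' := insert τ Y with hY'def
    set A := avail G S Y' \ avail G S Y with hAdef
    have hAS : A ⊆ S := fun x hx => avail_subset (Finset.mem_sdiff.mp hx).1
    have hAa : A ⊆ avail G S Y' := Finset.sdiff_subset
    have hAna : ∀ x ∈ A, x ∉ avail G S Y := fun x hx => (Finset.mem_sdiff.mp hx).2
    have hAT : ∀ x ∈ A, x ∉ T := fun x hx h => Finset.disjoint_left.mp hST (hAS hx) h
    have hmono : avail G S Y ⊆ avail G S Y' := avail_mono (Finset.subset_insert τ Y)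
    have hAunion : avail G S Y ∪ A = avail G S Y' := by
      ext x
      simp only [hAdef, Finset.mem_union, Finset.mem_sdiff]
      constructor
      · rintro (h | h)
        · exact hmono h
        · exact h.1
      · intro h
        by_cases hx : x ∈ avail G S Y
        · exact Or.inl hx
        · exact Or.inr ⟨h, hx⟩
    have hcov' : Y' ∪ rest.toFinset = T := by
      rw [← hcov, List.toFinset_cons]
      ext x
      simp only [hY'def, Finset.mem_union, Finset.mem_insert]
      tauto
    have hpre' : ∀ j < rest.length, bnd G S (Y' ∪ (rest.take j).toFinset) < k := by
      intro j hj
      have he : Y' ∪ (rest.take j).toFinset = Y ∪ ((τ :: rest).take (j+1)).toFinset := by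
        rw [List.take_succ_cons, List.toFinset_cons]
        ext x
        simp only [hY'def, Finset.mem_union, Finset.mem_insert]
        tauto
      rw [he]
      exact hpre (j+1) (by simp only [List.length_cons]; omega)
    obtain ⟨ih1, ih2, ih3, ih4⟩ := ih Y' (Finset.insert_subset hτT hY)
      (List.nodup_cons.mp hnd).2
      (fun x hx => ⟨(hLT x (List.mem_cons_of_mem τ hx)).1,
        fun hmem => by
          rcases Finset.mem_insert.mp hmem with rfl | h
          · exact (List.nodup_cons.mp hnd).1 hx
          · exact (hLT x (List.mem_cons_of_mem τ hx)).2 h⟩)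
      hcov' hpre'
    have hb0 : bnd G S Y < k := by
      have := hpre 0 (by simp)
      simpa using this
    have hgo : go G S (τ :: rest) Y = τ :: (A.toList ++ go G S rest Y') := by
      simp only [go, hAdef, hY'def]
    have hτA : τ ∉ A.toList := fun h => hτS (hAS (Finset.mem_toList.mp h))
    have hτrec : τ ∉ go G S rest Y' := by
      intro hx
      rcases ih2 τ hx with h | h
      · exact (List.nodup_cons.mp hnd).1 h
      · exact hτS h.1
    have hArec : ∀ x ∈ A.toList, x ∉ go G S rest Y' := by
      intro x hxA hxrec
      have hxA' : x ∈ A := Finset.mem_toList.mp hxA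
      rcases ih2 x hxrec with h | h
      · exact hAT x hxA' (hLT x (List.mem_cons_of_mem τ h)).1
      · exact h.2 (hAa hxA')
    rw [hgo]
    refine ⟨?_, ?_, ?_, ?_⟩
    · -- nodup
      refine List.nodup_cons.mpr ⟨?_, ?_⟩
      · intro hmem
        rcases List.mem_append.mp hmem with h | h
        · exact hτA h
        · exact hτrec h
      · exact List.nodup_append'.mpr ⟨A.nodup_toList, ih1, hArec⟩
    · -- elements
      intro x hx
      rcases List.mem_cons.mp hx with rfl | hx2
      · exact Or.inl (List.mem_cons_self)
      rcases List.mem_append.mp hx2 with h | h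
      · have hxA : x ∈ A := Finset.mem_toList.mp h
        exact Or.inr ⟨hAS hxA, hAna x hxA⟩
      · rcases ih2 x h with h' | h'
        · exact Or.inl (List.mem_cons_of_mem τ h')
        · exact Or.inr ⟨h'.1, fun hc => h'.2 (hmono hc)⟩
    · -- toFinset
      have hYLT : Y ∪ (τ :: rest).toFinset = Y' ∪ rest.toFinset := by
        rw [List.toFinset_cons]
        ext x
        simp only [hY'def, Finset.mem_union, Finset.mem_insert]
        tauto
      rw [hYLT, List.toFinset_cons, List.toFinset_append, Finset.toList_toFinset, ih3,
        List.toFinset_cons]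
      ext x
      have m1 : x ∈ avail G S Y → x ∈ avail G S Y' := fun h => hmono h
      have m2 : x ∈ avail G S Y' → x ∈ avail G S (Y' ∪ rest.toFinset) :=
        fun h => avail_mono Finset.subset_union_left h
      simp only [hAdef, Finset.mem_insert, Finset.mem_union, Finset.mem_sdiff]
      tauto
    · -- prefix invariants
      intro i
      rcases Nat.eq_zero_or_pos i with rfl | hipos
      · simp only [List.take_zero, List.toFinset_nil, Finset.empty_inter,
          Finset.union_empty]
        constructor
        · intro s hs
          exact (mem_avail.mp hs).2
        · rw [bnd_eq] at hb0
          omega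
      obtain ⟨j, rfl⟩ : ∃ j', i = j' + 1 := ⟨i - 1, by omega⟩
      rw [List.take_succ_cons, List.toFinset_cons, List.take_append,
        List.toFinset_append]
      by_cases hj : j ≤ A.toList.length
      · -- still inside the A-block
        have hrec0 : j - A.toList.length = 0 := by omega
        rw [hrec0]
        simp only [List.take_zero, List.toFinset_nil, Finset.union_empty]
        set P1 := (A.toList.take j).toFinset with hP1def
        have hP1A : P1 ⊆ A := by
          intro x hx
          rw [hP1def, List.mem_toFinset] at hx
          exact Finset.mem_toList.mp ((List.take_sublist j A.toList).subset hx)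
        have hPS : insert τ P1 ∩ S = P1 := by
          ext x
          simp only [Finset.mem_inter, Finset.mem_insert]
          constructor
          · rintro ⟨rfl | h, hxS⟩
            · exact absurd hxS hτS
            · exact h
          · intro h
            exact ⟨Or.inr h, hAS (hP1A h)⟩
        have hPT : insert τ P1 ∩ T = {τ} := by
          ext x
          simp only [Finset.mem_inter, Finset.mem_insert, Finset.mem_singleton]
          constructor
          · rintro ⟨rfl | h, hxT⟩
            · rfl
            · exact absurd hxT (hAT x (hP1A h))
          · rintro rfl
            exact ⟨Or.inl rfl, hτT⟩
        rw [hPS, hPT]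
        constructor
        · intro s hs
          rcases Finset.mem_union.mp hs with h | h
          · exact (mem_avail.mp h).2.trans
              (Finset.subset_union_left)
          · have : s ∈ avail G S Y' := hAa (hP1A h)
            refine (mem_avail.mp this).2.trans ?_
            intro y hy
            rcases Finset.mem_insert.mp hy with rfl | hyY
            · exact Finset.mem_union_right _ (Finset.mem_singleton_self y)
            · exact Finset.mem_union_left _ hyY
        · have c1 : (S \ (avail G S Y ∪ P1)).card ≤ (S \ avail G S Y).card :=
            Finset.card_le_card (Finset.sdiff_subset_sdiff (le_refl _)
              Finset.subset_union_left)
          have c2 : (Y ∪ {τ}).card ≤ Y.card + 1 := by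
            refine le_trans (Finset.card_union_le _ _) ?_
            simp
          rw [bnd_eq] at hb0
          omega
      · -- past the A-block
        push_neg at hj
        rw [List.take_of_length_le (le_of_lt hj), Finset.toList_toFinset]
        set R1 := ((go G S rest Y').take (j - A.toList.length)).toFinset with hR1def
        have e1 : avail G S Y ∪ (insert τ (A ∪ R1) ∩ S) = avail G S Y' ∪ (R1 ∩ S) := by
          ext x
          have m1 : x ∈ avail G S Y → x ∈ avail G S Y' := fun h => hmono h
          have m2 : x ∈ A → x ∈ S := fun h => hAS h
          have m3 : x ∈ avail G S Y' → x ∈ avail G S Y ∨ x ∈ A := by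
            intro h
            rw [← hAunion] at h
            exact Finset.mem_union.mp h
          have m4 : x ∈ A → x ∈ avail G S Y' := fun h => hAa h
          have m5 : x ∈ avail G S Y' → x ∈ S := fun h => avail_subset h
          have m6 : x ∈ avail G S Y → x ∈ S := fun h => avail_subset h
          simp only [Finset.mem_union, Finset.mem_inter, Finset.mem_insert]
          constructor
          · rintro (h | ⟨rfl | h, hxS⟩)
            · exact Or.inl (m1 h)
            · exact absurd hxS hτS
            · rcases h with h' | h'
              · exact Or.inl (m4 h')
              · exact Or.inr ⟨h', hxS⟩
          · rintro (h | ⟨h1, h2⟩)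
            · rcases m3 h with h' | h'
              · exact Or.inl h'
              · exact Or.inr ⟨Or.inr (Or.inl h'), m2 h'⟩
            · exact Or.inr ⟨Or.inr (Or.inr h1), h2⟩
        have e2 : Y ∪ (insert τ (A ∪ R1) ∩ T) = Y' ∪ (R1 ∩ T) := by
          ext x
          simp only [Finset.mem_union, Finset.mem_inter, Finset.mem_insert, hY'def]
          constructor
          · rintro (h | ⟨rfl | h, hxT⟩)
            · exact Or.inl (Or.inr h)
            · exact Or.inl (Or.inl rfl)
            · rcases h with h' | h'
              · exact absurd hxT (hAT x h')
              · exact Or.inr ⟨h', hxT⟩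
          · rintro (h | ⟨h1, h2⟩)
            · rcases h with rfl | h
              · exact Or.inr ⟨Or.inl rfl, hτT⟩
              · exact Or.inl h
            · exact Or.inr ⟨Or.inr (Or.inr h1), h2⟩
        rw [e1, e2]
        exact ih4 (j - A.toList.length)

/-- L2 : from a good enumeration to a monotone reconfiguration sequence -/
lemma seq_of_goodEnum (hS : IsVC G S) (hT : IsVC G T) (hST : Disjoint S T)
    (hSk : S.card ≤ k) (hTk : T.card ≤ k) {E : List V} (hE : GoodEnum G k S T E) :
    ∃ t Q, ReconfSeq G k S T t Q ∧ MonotoneSeq t Q := by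
  obtain ⟨hEnd, hET, hEpre⟩ := hE
  have hEmemT : ∀ x ∈ E, x ∈ T := fun x hx => hET ▸ List.mem_toFinset.mpr hx
  obtain ⟨g1, g2, g3, g4⟩ := go_spec hS hT hST hTk E ∅ (Finset.empty_subset T) hEnd
    (fun x hx => ⟨hEmemT x hx, Finset.notMem_empty x⟩)
    (by rw [Finset.empty_union]; exact hET)
    (fun j hj => by rw [Finset.empty_union]; exact hEpre j hj)
  set ev : List V := (avail G S ∅).toList ++ go G S E ∅ with hevdef
  have hav0S : avail G S ∅ ⊆ S := avail_subset
  have hevnd : ev.Nodup := by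
    rw [hevdef, List.nodup_append']
    refine ⟨Finset.nodup_toList _, g1, ?_⟩
    intro x hx hx2
    have hxS : x ∈ avail G S ∅ := Finset.mem_toList.mp hx
    rcases g2 x hx2 with h | h
    · exact Finset.disjoint_left.mp hST (hav0S hxS) (hEmemT x h)
    · exact h.2 hxS
  have hevfin : ev.toFinset = S ∪ T := by
    rw [hevdef, List.toFinset_append, Finset.toList_toFinset, g3,
      Finset.empty_union, hET, avail_T hS hT hST]
    ext x
    simp only [Finset.mem_union, Finset.mem_sdiff]
    constructor
    · rintro (h | h | h)
      · exact Or.inl (hav0S h)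
      · exact Or.inr h
      · exact Or.inl h.1
    · rintro (h | h)
      · by_cases hx : x ∈ avail G S ∅
        · exact Or.inl hx
        · exact Or.inr (Or.inr ⟨h, hx⟩)
      · exact Or.inr (Or.inl h)
  set P : ℕ → Finset V := fun i => (ev.take i).toFinset with hPdef
  have hprefix : ∀ i : ℕ,
      (∀ s ∈ P i, s ∈ S → nbr G s ⊆ P i ∩ T)
      ∧ (S \ P i).card + (P i ∩ T).card ≤ k := by
    intro i
    have htake : P i = ((avail G S ∅).toList.take i).toFinset
        ∪ ((go G S E ∅).take (i - ((avail G S ∅).toList).length)).toFinset := by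
      rw [hPdef]
      simp only [hevdef]
      rw [List.take_append, List.toFinset_append]
    by_cases hi : i ≤ ((avail G S ∅).toList).length
    · have h0 : i - ((avail G S ∅).toList).length = 0 := by omega
      rw [h0] at htake
      simp only [List.take_zero, List.toFinset_nil, Finset.union_empty] at htake
      have hPS : P i ⊆ S := by
        rw [htake]
        intro x hx
        exact hav0S (Finset.mem_toList.mp ((List.take_sublist i _).subset
          (List.mem_toFinset.mp hx)))
      have hPavail : P i ⊆ avail G S ∅ := by
        rw [htake]
        intro x hx
        exact Finset.mem_toList.mp ((List.take_sublist i _).subset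
          (List.mem_toFinset.mp hx))
      constructor
      · intro s hs _
        intro y hy
        exact absurd ((mem_avail.mp (hPavail hs)).2 hy) (Finset.notMem_empty y)
      · have h1 : (S \ P i).card ≤ S.card := Finset.card_le_card Finset.sdiff_subset
        have h2 : (P i ∩ T).card = 0 := by
          rw [Finset.card_eq_zero]
          rw [Finset.eq_empty_iff_forall_notMem]
          intro x hx
          rw [Finset.mem_inter] at hx
          exact Finset.disjoint_left.mp hST (hPS hx.1) hx.2
        omega
    · push_neg at hi
      rw [List.take_of_length_le (le_of_lt hi), Finset.toList_toFinset] at htake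
      set Pg := ((go G S E ∅).take (i - ((avail G S ∅).toList).length)).toFinset
        with hPgdef
      obtain ⟨ga, gb⟩ := g4 (i - ((avail G S ∅).toList).length)
      have e1 : avail G S ∅ ∪ (Pg ∩ S) = P i ∩ S ∪ avail G S ∅ := by
        rw [htake]
        ext x
        simp only [Finset.mem_union, Finset.mem_inter]
        constructor
        · rintro (h | ⟨h1, h2⟩)
          · exact Or.inr h
          · exact Or.inl ⟨Or.inr h1, h2⟩
        · rintro (⟨h1 | h1, h2⟩ | h)
          · exact Or.inl h1
          · exact Or.inr ⟨h1, h2⟩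
          · exact Or.inl h
      have e2 : Pg ∩ T = P i ∩ T := by
        rw [htake]
        ext x
        simp only [Finset.mem_union, Finset.mem_inter]
        constructor
        · rintro ⟨h1, h2⟩
          exact ⟨Or.inr h1, h2⟩
        · rintro ⟨h1 | h1, h2⟩
          · exact absurd h2 (Finset.disjoint_left.mp hST (hav0S h1))
          · exact ⟨h1, h2⟩
      constructor
      · intro s hs hsS
        have hs' : s ∈ avail G S ∅ ∪ (Pg ∩ S) := by
          rw [htake] at hs
          rcases Finset.mem_union.mp hs with h | h
          · exact Finset.mem_union_left _ h
          · exact Finset.mem_union_right _ (Finset.mem_inter.mpr ⟨h, hsS⟩)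
        have := ga s hs'
        rw [Finset.empty_union] at this
        rw [← e2]
        exact this
      · have e3 : S \ P i = S \ (avail G S ∅ ∪ (Pg ∩ S)) := by
          rw [htake]
          ext x
          simp only [Finset.mem_sdiff, Finset.mem_union, Finset.mem_inter]
          constructor
          · rintro ⟨h1, h2⟩
            exact ⟨h1, fun h => h2 (by tauto)⟩
          · rintro ⟨h1, h2⟩
            refine ⟨h1, fun h => h2 ?_⟩
            rcases h with h | h
            · exact Or.inl h
            · exact Or.inr ⟨h, h1⟩
        rw [Finset.empty_union] at gb
        rw [e3, ← e2]
        exact gb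
  set Q : ℕ → Finset V := fun i => (S \ P i) ∪ (P i ∩ T) with hQdef
  set t : ℕ := ev.length with htdef
  have key : ∀ i, i < t → ∃ x, x ∈ S ∪ T ∧ P (i+1) = insert x (P i) ∧ x ∉ P i ∧
      symmDiff (Q i) (Q (i+1)) = {x} := by
    intro i hi
    obtain ⟨x, hx1, hx2, hx3⟩ := take_succ_ex ev i hi
    have hxP : x ∉ P i := fun h => hx3 hevnd (List.mem_toFinset.mp h)
    have hxST : x ∈ S ∪ T := hevfin ▸ List.mem_toFinset.mpr hx2
    have hPsucc : P (i+1) = insert x (P i) := by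
      rw [hPdef]
      simp only
      rw [hx1, List.toFinset_append]
      ext y
      simp only [Finset.mem_union, List.toFinset_cons, List.toFinset_nil,
        Finset.mem_insert, Finset.notMem_empty, or_false, List.mem_toFinset]
      tauto
    refine ⟨x, hxST, hPsucc, hxP, ?_⟩
    rcases Finset.mem_union.mp hxST with hxS | hxT
    · -- x is removed from the cover
      have hxT : x ∉ T := Finset.disjoint_left.mp hST hxS
      have hQx : x ∈ Q i := Finset.mem_union_left _ (Finset.mem_sdiff.mpr ⟨hxS, hxP⟩)
      have hQe : Q (i+1) = (Q i).erase x := by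
        rw [hQdef]
        simp only
        rw [hPsucc]
        ext y
        by_cases hyx : y = x
        · subst hyx
          simp only [Finset.mem_union, Finset.mem_sdiff, Finset.mem_insert,
            Finset.mem_inter, Finset.mem_erase]
          simp [hxT]
        · simp only [Finset.mem_union, Finset.mem_sdiff, Finset.mem_insert,
            Finset.mem_inter, Finset.mem_erase, hyx]
          tauto
      rw [hQe]
      have : symmDiff (Q i) ((Q i).erase x) = {x} := by
        ext y
        rw [Finset.mem_symmDiff]
        simp only [Finset.mem_erase, Finset.mem_singleton]
        by_cases hyx : y = x
        · subst hyx; simp [hQx]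
        · simp [hyx]
      exact this
    · -- x is added to the cover
      have hxS : x ∉ S := fun h => Finset.disjoint_left.mp hST h hxT
      have hQx : x ∉ Q i := by
        rw [hQdef]
        simp only
        rw [Finset.mem_union]
        rintro (h | h)
        · exact hxS (Finset.mem_sdiff.mp h).1
        · exact hxP (Finset.mem_inter.mp h).1
      have hQe : Q (i+1) = insert x (Q i) := by
        rw [hQdef]
        simp only
        rw [hPsucc]
        ext y
        by_cases hyx : y = x
        · subst hyx
          simp only [Finset.mem_union, Finset.mem_sdiff, Finset.mem_insert,
            Finset.mem_inter, Finset.mem_erase]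
          simp [hxS, hxT]
        · simp only [Finset.mem_union, Finset.mem_sdiff, Finset.mem_insert,
            Finset.mem_inter, Finset.mem_erase, hyx]
          tauto
      rw [hQe]
      have : symmDiff (Q i) (insert x (Q i)) = {x} := by
        ext y
        rw [Finset.mem_symmDiff]
        simp only [Finset.mem_insert, Finset.mem_singleton]
        by_cases hyx : y = x
        · subst hyx; simp [hQx]
        · simp [hyx]
      exact this
  refine ⟨t, Q, ⟨?_, ?_, ?_, ?_⟩, ?_⟩
  · rw [hQdef]; simp [hPdef]
  · rw [hQdef]
    simp only
    have : P t = S ∪ T := by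
      rw [hPdef, htdef]
      simp only [List.take_length]
      exact hevfin
    rw [this]
    rw [Finset.sdiff_eq_empty_iff_subset.mpr Finset.subset_union_left,
      Finset.union_inter_cancel_right, Finset.empty_union]
  · intro i _
    constructor
    · intro u v hadj
      rcases edge_ST hS hT hST hadj with ⟨huS, hvT⟩ | ⟨hvS, huT⟩
      · by_cases hu : u ∈ P i
        · right
          rw [hQdef]
          simp only
          refine Finset.mem_union_right _ ?_
          exact (hprefix i).1 u hu huS (mem_nbr.mpr hadj)
        · left
          exact Finset.mem_union_left _ (Finset.mem_sdiff.mpr ⟨huS, hu⟩)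
      · by_cases hv : v ∈ P i
        · left
          rw [hQdef]
          simp only
          refine Finset.mem_union_right _ ?_
          exact (hprefix i).1 v hv hvS (mem_nbr.mpr (hadj.symm))
        · right
          exact Finset.mem_union_left _ (Finset.mem_sdiff.mpr ⟨hvS, hv⟩)
    · rw [hQdef]
      simp only
      refine le_trans (Finset.card_union_le _ _) ?_
      exact (hprefix i).2
  · intro i hi
    obtain ⟨x, _, _, _, hsymm⟩ := key i hi
    rw [hsymm, Finset.card_singleton]
  · -- monotone
    intro v
    rw [Finset.card_le_one]
    intro a ha b hb
    rw [Finset.mem_filter, Finset.mem_range] at ha hb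
    obtain ⟨x, _, hx2, hx3, hsymm⟩ := key a ha.1
    obtain ⟨y, _, hy2, hy3, hsymm'⟩ := key b hb.1
    have hva : v = x := by
      have := ha.2
      rw [hsymm, Finset.mem_singleton] at this
      exact this
    have hvb : v = y := by
      have := hb.2
      rw [hsymm', Finset.mem_singleton] at this
      exact this
    have hxy : x = y := hva.symm.trans hvb
    have hPmono : ∀ {m n : ℕ}, m ≤ n → P m ⊆ P n := by
      intro m n hmn z hz
      exact List.mem_toFinset.mpr (mem_take_mono hmn (List.mem_toFinset.mp hz))
    have hxa1 : x ∈ P (a+1) := by rw [hx2]; exact Finset.mem_insert_self x (P a)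
    have hyb1 : y ∈ P (b+1) := by rw [hy2]; exact Finset.mem_insert_self y (P b)
    by_contra hab
    rcases Nat.lt_or_ge a b with hlt | hge
    · exact hy3 (by rw [← hxy]; exact hPmono (by omega : a + 1 ≤ b) hxa1)
    · have hba : b < a := by omega
      exact hx3 (by rw [hxy]; exact hPmono (by omega : b + 1 ≤ a) hyb1)

end L2

section L3

variable {G : SimpleGraph V} {k : ℕ} {S T : Finset V}

/-- L3 : from a good enumeration to a path decomposition of width ≤ k-1 -/
lemma pd_of_goodEnum (hk : 0 < k) (hS : IsVC G S) (hT : IsVC G T) (hST : Disjoint S T)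
    (hSk : S.card ≤ k) {E : List V} (hE : GoodEnum G k S T E) :
    ∃ p B, PathDecomp (cliquify (cliquify G S) T) p B ∧ ∀ i < p, (B i).card ≤ k := by
  classical
  obtain ⟨hEnd, hET, hEpre⟩ := hE
  set m := E.length with hmdef
  set R : List V := (Finset.univ \ (S ∪ T)).toList with hRdef
  set p := m + 1 + R.length with hpdef
  set Y : ℕ → Finset V := fun j => (E.take j).toFinset with hYdef
  have hYmono : ∀ {i j : ℕ}, i ≤ j → Y i ⊆ Y j := by
    intro i j hij x hx
    exact List.mem_toFinset.mpr (mem_take_mono hij (List.mem_toFinset.mp hx))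
  have hYT : ∀ j, Y j ⊆ T := by
    intro j x hx
    rw [← hET]
    exact List.mem_toFinset.mpr ((List.take_sublist j E).subset (List.mem_toFinset.mp hx))
  have hYm : Y m = T := by
    rw [hYdef]
    simp only [hmdef, List.take_length]
    exact hET
  have hYcard : ∀ j, j ≤ m → (Y j).card = j := by
    intro j hj
    rw [hYdef]
    simp only
    rw [List.toFinset_card_of_nodup (hEnd.sublist (List.take_sublist j E))]
    rw [List.length_take]
    omega
  set B : ℕ → Finset V := fun j =>
    if j = 0 then S
    else if j ≤ m then Y j ∪ S.filter (fun s => ¬ nbr G s ⊆ Y (j-1))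
    else if h : j - (m+1) < R.length then {R.get ⟨j - (m+1), h⟩} else ∅
    with hBdef
  have hB0 : B 0 = S := by rw [hBdef]; rfl
  have hBmid : ∀ j, 1 ≤ j → j ≤ m →
      B j = Y j ∪ S.filter (fun s => ¬ nbr G s ⊆ Y (j-1)) := by
    intro j h1 h2
    rw [hBdef]
    simp only [if_neg (by omega : ¬ j = 0), if_pos h2]
  have hBR : ∀ j, m < j → B j = if h : j - (m+1) < R.length
      then {R.get ⟨j - (m+1), h⟩} else ∅ := by
    intro j hj
    rw [hBdef]
    simp only [if_neg (by omega : ¬ j = 0), if_neg (by omega : ¬ j ≤ m)]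
  have hRmem : ∀ x ∈ R, x ∉ S ∧ x ∉ T := by
    intro x hx
    have := Finset.mem_toList.mp hx
    rw [Finset.mem_sdiff, Finset.mem_union] at this
    exact ⟨fun h => this.2 (Or.inl h), fun h => this.2 (Or.inr h)⟩
  -- membership characterizations
  have hBS : ∀ s ∈ S, ∀ j, (s ∈ B j ↔ j = 0 ∨ (1 ≤ j ∧ j ≤ m ∧ ¬ nbr G s ⊆ Y (j-1))) := by
    intro s hs j
    have hsT : s ∉ T := Finset.disjoint_left.mp hST hs
    rcases Nat.eq_zero_or_pos j with rfl | hj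
    · rw [hB0]; simp [hs]
    by_cases hjm : j ≤ m
    · rw [hBmid j hj hjm]
      rw [Finset.mem_union, Finset.mem_filter]
      constructor
      · rintro (h | h)
        · exact absurd (hYT j h) hsT
        · exact Or.inr ⟨hj, hjm, h.2⟩
      · rintro (h | h)
        · omega
        · exact Or.inr ⟨hs, h.2.2⟩
    · rw [hBR j (by omega)]
      constructor
      · intro h
        by_cases hh : j - (m+1) < R.length
        · rw [dif_pos hh] at h
          rw [Finset.mem_singleton] at h
          exact absurd hs (h ▸ (hRmem _ (List.get_mem R _)).1)
        · rw [dif_neg hh] at h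
          exact absurd h (Finset.notMem_empty s)
      · rintro (h | h) <;> omega
  have hBT : ∀ τ ∈ T, ∀ j, (τ ∈ B j ↔ 1 ≤ j ∧ j ≤ m ∧ τ ∈ Y j) := by
    intro τ hτ j
    have hτS : τ ∉ S := fun h => Finset.disjoint_left.mp hST h hτ
    rcases Nat.eq_zero_or_pos j with rfl | hj
    · rw [hB0]; simp [hτS]
    by_cases hjm : j ≤ m
    · rw [hBmid j hj hjm]
      rw [Finset.mem_union, Finset.mem_filter]
      constructor
      · rintro (h | h)
        · exact ⟨hj, hjm, h⟩
        · exact absurd h.1 hτS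
      · rintro ⟨_, _, h⟩
        exact Or.inl h
    · rw [hBR j (by omega)]
      constructor
      · intro h
        by_cases hh : j - (m+1) < R.length
        · rw [dif_pos hh] at h
          rw [Finset.mem_singleton] at h
          exact absurd hτ (h ▸ (hRmem _ (List.get_mem R _)).2)
        · rw [dif_neg hh] at h
          exact absurd h (Finset.notMem_empty τ)
      · intro h
        omega
  have hBother : ∀ v, v ∉ S → v ∉ T → ∀ j,
      (v ∈ B j ↔ m + 1 ≤ j ∧ ∃ h : j - (m+1) < R.length, R.get ⟨j - (m+1), h⟩ = v) := by
    intro v hvS hvT j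
    rcases Nat.eq_zero_or_pos j with rfl | hj
    · rw [hB0]; simp [hvS]
    by_cases hjm : j ≤ m
    · rw [hBmid j hj hjm]
      rw [Finset.mem_union, Finset.mem_filter]
      constructor
      · rintro (h | h)
        · exact absurd (hYT j h) hvT
        · exact absurd h.1 hvS
      · intro h
        omega
    · rw [hBR j (by omega)]
      by_cases hh : j - (m+1) < R.length
      · rw [dif_pos hh]
        rw [Finset.mem_singleton]
        constructor
        · intro h
          exact ⟨by omega, hh, h.symm⟩
        · rintro ⟨_, _, h⟩
          exact h.symm
      · rw [dif_neg hh]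
        simp only [Finset.notMem_empty, false_iff]
        rintro ⟨_, h, _⟩
        exact hh h
  refine ⟨p, B, ⟨?_, ?_, ?_⟩, ?_⟩
  · -- mem_bag
    intro v
    by_cases hvS : v ∈ S
    · exact ⟨0, by omega, hB0 ▸ hvS⟩
    by_cases hvT : v ∈ T
    · have hm1 : 1 ≤ m := by
        have : v ∈ E.toFinset := hET ▸ hvT
        rw [List.mem_toFinset] at this
        have := List.length_pos_of_mem this
        omega
      refine ⟨m, by omega, ?_⟩
      rw [hBT v hvT m]
      exact ⟨hm1, le_refl m, hYm ▸ hvT⟩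
    · have hvR : v ∈ R := by
        rw [hRdef, Finset.mem_toList, Finset.mem_sdiff, Finset.mem_union]
        exact ⟨Finset.mem_univ v, fun h => h.elim hvS hvT⟩
      obtain ⟨r, hr⟩ := List.mem_iff_get.mp hvR
      refine ⟨m + 1 + r.1, by omega, ?_⟩
      rw [hBother v hvS hvT]
      refine ⟨by omega, by omega, ?_⟩
      have : m + 1 + r.1 - (m+1) = r.1 := by omega
      simp_rw [this]
      rw [← hr]
  · -- edge_bag
    intro u v hadj
    rw [gbar_adj] at hadj
    obtain ⟨hne, hcase⟩ := hadj
    have hGedge : ∀ u' v', G.Adj u' v' → u' ∈ S → v' ∈ T →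
        ∃ i, i < p ∧ u' ∈ B i ∧ v' ∈ B i := by
      intro u' v' hadj' huS hvT
      have hvE : ∃ j, v' ∈ Y j := ⟨m, hYm ▸ hvT⟩
      set j₀ := Nat.find hvE with hj₀def
      have hj₀ : v' ∈ Y j₀ := Nat.find_spec hvE
      have hj₀min : ∀ i < j₀, v' ∉ Y i := fun i hi => Nat.find_min hvE hi
      have hj₀pos : 1 ≤ j₀ := by
        rcases Nat.eq_zero_or_pos j₀ with h | h
        · exfalso
          rw [h] at hj₀
          simp [hYdef] at hj₀
        · exact h
      have hj₀m : j₀ ≤ m := by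
        by_contra hc
        exact hj₀min m (by omega) (hYm ▸ hvT)
      refine ⟨j₀, by omega, ?_, ?_⟩
      · rw [hBS u' huS j₀]
        refine Or.inr ⟨hj₀pos, hj₀m, fun hsub => ?_⟩
        exact hj₀min (j₀ - 1) (by omega) (hsub (mem_nbr.mpr hadj'))
      · rw [hBT v' hvT j₀]
        exact ⟨hj₀pos, hj₀m, hj₀⟩
    rcases hcase with hG | ⟨huS, hvS⟩ | ⟨huT, hvT⟩
    · rcases edge_ST hS hT hST hG with ⟨huS, hvT⟩ | ⟨hvS, huT⟩
      · exact hGedge u v hG huS hvT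
      · obtain ⟨i, hi, h1, h2⟩ := hGedge v u (hG.symm) hvS huT
        exact ⟨i, hi, h2, h1⟩
    · exact ⟨0, by omega, hB0 ▸ huS, hB0 ▸ hvS⟩
    · have hm1 : 1 ≤ m := by
        have : u ∈ E.toFinset := hET ▸ huT
        rw [List.mem_toFinset] at this
        have := List.length_pos_of_mem this
        omega
      refine ⟨m, by omega, ?_, ?_⟩
      · rw [hBT u huT m]; exact ⟨hm1, le_refl m, hYm ▸ huT⟩
      · rw [hBT v hvT m]; exact ⟨hm1, le_refl m, hYm ▸ hvT⟩
  · -- interval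
    intro v i j l hij hjl hlp hvi hvl
    by_cases hvS : v ∈ S
    · rw [hBS v hvS] at hvi hvl ⊢
      rcases hvl with h0 | ⟨h1, h2, h3⟩
      · left; omega
      · rcases Nat.eq_zero_or_pos j with rfl | hj
        · left; rfl
        · refine Or.inr ⟨hj, by omega, fun hsub => h3 (hsub.trans (hYmono (by omega)))⟩
    by_cases hvT : v ∈ T
    · rw [hBT v hvT] at hvi hvl ⊢
      obtain ⟨hi1, hi2, hi3⟩ := hvi
      obtain ⟨hl1, hl2, hl3⟩ := hvl
      exact ⟨by omega, by omega, hYmono hij hi3⟩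
    · rw [hBother v hvS hvT] at hvi hvl ⊢
      obtain ⟨hi1, hi2, hi3⟩ := hvi
      obtain ⟨hl1, hl2, hl3⟩ := hvl
      have hRnd : R.Nodup := Finset.nodup_toList _
      have : i - (m+1) = l - (m+1) := by
        have := List.nodup_iff_injective_get.mp hRnd
          (a₁ := ⟨i - (m+1), hi2⟩) (a₂ := ⟨l - (m+1), hl2⟩) (by rw [hi3, hl3])
        exact congrArg Fin.val this
      have hil : i = l := by omega
      subst hil
      have hji : j = i := by omega
      subst hji
      exact ⟨hi1, hi2, hi3⟩
  · -- widths
    intro j hj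
    rcases Nat.eq_zero_or_pos j with rfl | hjpos
    · rw [hB0]; exact hSk
    by_cases hjm : j ≤ m
    · rw [hBmid j hjpos hjm]
      have hbnd : bnd G S (Y (j-1)) < k := hEpre (j-1) (by omega)
      rw [bnd_eq] at hbnd
      have hYc1 := hYcard (j-1) (by omega)
      have hYc2 := hYcard j hjm
      have hcu := Finset.card_union_le (Y j)
        (S.filter (fun s => ¬ nbr G s ⊆ Y (j-1)))
      have hfil : (S.filter (fun s => ¬ nbr G s ⊆ Y (j-1))).card
          = (S \ avail G S (Y (j-1))).card := by
        rw [sdiff_avail]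
      omega
    · rw [hBR j (by omega)]
      by_cases hh : j - (m+1) < R.length
      · rw [dif_pos hh]
        simpa using Nat.succ_le_of_lt hk
      · rw [dif_neg hh]
        simp

end L3

section L4

variable {G : SimpleGraph V} {k : ℕ} {S T : Finset V}

lemma pd_reverse {H : SimpleGraph V} {p : ℕ} {B : ℕ → Finset V}
    (hpd : PathDecomp H p B) : PathDecomp H p (fun l => B (p - 1 - l)) := by
  constructor
  · intro v
    obtain ⟨i, hi, hv⟩ := hpd.mem_bag v
    refine ⟨p - 1 - i, by omega, ?_⟩
    have he : p - 1 - (p - 1 - i) = i := by omega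
    simp only [he]
    exact hv
  · intro u v h
    obtain ⟨i, hi, hu, hv⟩ := hpd.edge_bag h
    refine ⟨p - 1 - i, by omega, ?_⟩
    have he : p - 1 - (p - 1 - i) = i := by omega
    simp only [he]
    exact ⟨hu, hv⟩
  · intro v i j l hij hjl hlp hvi hvl
    exact hpd.interval v (p - 1 - l) (p - 1 - j) (p - 1 - i)
      (by omega) (by omega) (by omega) hvl hvi

lemma clique_bag {H : SimpleGraph V} {p : ℕ} {B : ℕ → Finset V}
    (hpd : PathDecomp H p B) {W : Finset V} (hW : W.Nonempty)
    (hclq : ∀ u ∈ W, ∀ v ∈ W, u ≠ v → H.Adj u v) :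
    ∃ i, i < p ∧ W ⊆ B i := by
  classical
  set fst : V → ℕ := fun v => Nat.find (hpd.mem_bag v) with hfstdef
  have hfst : ∀ v, fst v < p ∧ v ∈ B (fst v) := fun v => Nat.find_spec (hpd.mem_bag v)
  have hfstmin : ∀ v i, i < p → v ∈ B i → fst v ≤ i := by
    intro v i hi hv
    exact Nat.find_min' (hpd.mem_bag v) ⟨hi, hv⟩
  obtain ⟨w₀, hw₀W, hw₀max⟩ := Finset.exists_max_image W fst hW
  refine ⟨fst w₀, (hfst w₀).1, ?_⟩
  intro w hw
  by_cases hww : w = w₀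
  · subst hww; exact (hfst w).2
  · obtain ⟨l, hl, hwB, hw₀B⟩ := hpd.edge_bag (hclq w hw w₀ hw₀W hww)
    exact hpd.interval w (fst w) (fst w₀) l (hw₀max w hw) (hfstmin w₀ l hl hw₀B) hl
      (hfst w).2 hwB

/-- L4 : from a path decomposition of width ≤ k-1 to a good enumeration -/
lemma goodEnum_of_pd (hS : IsVC G S) (hT : IsVC G T) (hST : Disjoint S T)
    (hSk : S.card ≤ k) (hTk : T.card ≤ k)
    (h : ∃ p B, PathDecomp (cliquify (cliquify G S) T) p B ∧ ∀ i < p, (B i).card ≤ k) :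
    ∃ E, GoodEnum G k S T E := by
  classical
  obtain ⟨p, B, hpd, hw⟩ := h
  by_cases hTe : T = ∅
  · exact ⟨[], List.nodup_nil, by simp [hTe], by simp⟩
  by_cases hSe : S = ∅
  · refine ⟨T.toList, Finset.nodup_toList T, Finset.toList_toFinset T, ?_⟩
    intro j hj
    unfold bnd
    rw [hSe, Finset.filter_empty, Finset.card_empty]
    have h1 : ((T.toList.take j).toFinset).card = j := by
      rw [List.toFinset_card_of_nodup ((Finset.nodup_toList T).sublist
        (List.take_sublist j T.toList))]
      rw [List.length_take]
      have := Finset.length_toList T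
      omega
    rw [Finset.length_toList] at hj
    omega
  -- both S and T nonempty
  obtain ⟨s₀, hs₀⟩ := Finset.nonempty_iff_ne_empty.mpr hSe
  obtain ⟨τ₀, hτ₀⟩ := Finset.nonempty_iff_ne_empty.mpr hTe
  have main : ∀ (B' : ℕ → Finset V), PathDecomp (cliquify (cliquify G S) T) p B' →
      (∀ i < p, (B' i).card ≤ k) → ∀ α β, α ≤ β → β < p → S ⊆ B' α → T ⊆ B' β →
      ∃ E, GoodEnum G k S T E := by
    clear hpd hw
    intro B hpd hw α β hαβ hβp hSα hTβ
    set σ : V → ℕ := fun v => Nat.find (hpd.mem_bag v) with hσdef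
    have hσ : ∀ v, σ v < p ∧ v ∈ B (σ v) := fun v => Nat.find_spec (hpd.mem_bag v)
    have hσmin : ∀ v i, i < p → v ∈ B i → σ v ≤ i :=
      fun v i hi hv => Nat.find_min' (hpd.mem_bag v) ⟨hi, hv⟩
    have hσβ : ∀ τ ∈ T, σ τ ≤ β := fun τ hτ => hσmin τ β hβp (hTβ hτ)
    set E : List V := T.toList.mergeSort (fun a b => decide (σ a ≤ σ b)) with hEdef
    have hperm : E.Perm T.toList := List.mergeSort_perm T.toList _
    have hEnd : E.Nodup := (List.Perm.nodup_iff hperm).mpr (Finset.nodup_toList T)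
    have hET : E.toFinset = T := by
      ext x
      rw [List.mem_toFinset, hperm.mem_iff, Finset.mem_toList]
    have hsorted : E.Pairwise (fun a b => σ a ≤ σ b) := by
      have := List.pairwise_mergeSort (le := fun a b => decide (σ a ≤ σ b))
        (fun a b c hab hbc => by
          rw [decide_eq_true_eq] at hab hbc ⊢
          omega)
        (fun a b => by
          rcases Nat.le_total (σ a) (σ b) with h | h
          · simp [h]
          · simp [h])
        T.toList
      exact this.imp (fun h => of_decide_eq_true h)
    refine ⟨E, hEnd, hET, ?_⟩
    intro j hj
    obtain ⟨x, hx1, hx2, hx3⟩ := take_succ_ex E j hj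
    have hx3' : x ∉ E.take j := hx3 hEnd
    set Y : Finset V := (E.take j).toFinset with hYdef
    have hxT : x ∈ T := hET ▸ List.mem_toFinset.mpr hx2
    have hxS : x ∉ S := fun h => Finset.disjoint_left.mp hST h hxT
    have hYT : Y ⊆ T := by
      intro y hy
      rw [← hET]
      exact List.mem_toFinset.mpr ((List.take_sublist j E).subset (List.mem_toFinset.mp hy))
    have hxY : x ∉ Y := fun h => hx3' (List.mem_toFinset.mp h)
    have hEsplit : E = (E.take j ++ [x]) ++ E.drop (j+1) := by
      rw [← hx1, List.take_append_drop]
    have hpairs := hEsplit ▸ hsorted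
    rw [List.pairwise_append] at hpairs
    obtain ⟨hp1, _, hp3⟩ := hpairs
    rw [List.pairwise_append] at hp1
    obtain ⟨_, _, hp13⟩ := hp1
    -- (i) every elem of Y has σ ≤ σ x
    have hYσ : ∀ τ ∈ Y, σ τ ≤ σ x := by
      intro τ hτ
      exact hp13 τ (List.mem_toFinset.mp hτ) x (List.mem_singleton_self x)
    -- (ii) elements of T outside Y∪{x} have σ ≥ σ x
    have hout : ∀ τ' ∈ T, τ' ∉ Y → τ' ≠ x → σ x ≤ σ τ' := by
      intro τ' hτ'T hτ'Y hτ'x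
      have hτ'E : τ' ∈ E := List.mem_toFinset.mp (hET ▸ hτ'T)
      rw [hEsplit] at hτ'E
      rcases List.mem_append.mp hτ'E with h | h
      · rcases List.mem_append.mp h with h' | h'
        · exact absurd (List.mem_toFinset.mpr h') hτ'Y
        · exact absurd (List.mem_singleton.mp h') hτ'x
      · exact hp3 x (List.mem_append_right _ (List.mem_singleton_self x)) τ' h
    set F : Finset V := S.filter (fun s => ¬ nbr G s ⊆ Y) with hFdef
    have hFS : F ⊆ S := Finset.filter_subset _ _
    have goal_eq : bnd G S Y = Y.card + F.card := rfl
    have hdisjYF : Disjoint Y F := by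
      apply Finset.disjoint_left.mpr
      intro a ha hb
      exact Finset.disjoint_left.mp hST (hFS hb) (hYT ha)
    have hxF : x ∉ F := fun h => hxS (hFS h)
    by_cases hI : α ≤ σ x
    · -- bag at σ x contains Y ∪ {x} ∪ F
      have hsub : insert x (Y ∪ F) ⊆ B (σ x) := by
        intro y hy
        rcases Finset.mem_insert.mp hy with rfl | hy'
        · exact (hσ y).2
        rcases Finset.mem_union.mp hy' with hyY | hyF
        · -- y ∈ Y : interval σ y ≤ σ x ≤ β
          exact hpd.interval y (σ y) (σ x) β (hYσ y hyY) (hσβ x hxT) hβp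
            (hσ y).2 (hTβ (hYT hyY))
        · -- y ∈ F
          obtain ⟨hyS, hynb⟩ := Finset.mem_filter.mp hyF
          obtain ⟨τ', hτ'nbr, hτ'Y⟩ := Finset.not_subset.mp hynb
          have hadj : G.Adj y τ' := mem_nbr.mp hτ'nbr
          have hτ'T : τ' ∈ T := nbr_subset_T hS hT hST hyS hτ'nbr
          have hσged : σ x ≤ σ τ' := by
            by_cases he : τ' = x
            · subst he; exact le_refl _
            · exact hout τ' hτ'T hτ'Y he
          obtain ⟨l, hl, hyB, hτ'B⟩ := hpd.edge_bag
            (by rw [gbar_adj]; exact ⟨hadj.ne, Or.inl hadj⟩)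
          have hlge : σ x ≤ l := le_trans hσged (hσmin τ' l hl hτ'B)
          exact hpd.interval y α (σ x) l hI hlge hl (hSα hyS) hyB
      have hcard : Y.card + F.card + 1 ≤ k := by
        have h1 : (insert x (Y ∪ F)).card = Y.card + F.card + 1 := by
          rw [Finset.card_insert_of_notMem (fun h => by
            rcases Finset.mem_union.mp h with h' | h'
            · exact hxY h'
            · exact hxF h')]
          rw [Finset.card_union_of_disjoint hdisjYF]
        have h2 := Finset.card_le_card hsub
        have h3 := hw (σ x) (hσ x).1
        omega
      rw [goal_eq]
      omega
    · -- σ x < α : bag α contains S ∪ Y ∪ {x}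
      push_neg at hI
      have hsub : insert x Y ∪ S ⊆ B α := by
        intro y hy
        rcases Finset.mem_union.mp hy with hy' | hyS
        · have hyT : y ∈ T := by
            rcases Finset.mem_insert.mp hy' with rfl | h
            · exact hxT
            · exact hYT h
          have hyσ : σ y ≤ α := by
            rcases Finset.mem_insert.mp hy' with rfl | h
            · omega
            · have := hYσ y h; omega
          exact hpd.interval y (σ y) α β hyσ hαβ hβp (hσ y).2 (hTβ hyT)
        · exact hSα hyS
      have hdisj2 : Disjoint (insert x Y) S := by
        apply Finset.disjoint_left.mpr
        intro a ha hb
        rcases Finset.mem_insert.mp ha with rfl | h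
        · exact hxS hb
        · exact Finset.disjoint_left.mp hST hb (hYT h)
      have h1 : (insert x Y ∪ S).card = Y.card + 1 + S.card := by
        rw [Finset.card_union_of_disjoint hdisj2,
          Finset.card_insert_of_notMem hxY]
      have h2 := Finset.card_le_card hsub
      have h3 := hw α (by omega)
      have h4 := Finset.card_le_card hFS
      rw [goal_eq]
      omega
  have hclqS : ∀ u ∈ S, ∀ v ∈ S, u ≠ v → (cliquify (cliquify G S) T).Adj u v := by
    intro u hu v hv huv
    rw [gbar_adj]
    exact ⟨huv, Or.inr (Or.inl ⟨hu, hv⟩)⟩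
  have hclqT : ∀ u ∈ T, ∀ v ∈ T, u ≠ v → (cliquify (cliquify G S) T).Adj u v := by
    intro u hu v hv huv
    rw [gbar_adj]
    exact ⟨huv, Or.inr (Or.inr ⟨hu, hv⟩)⟩
  obtain ⟨α, hαp, hSα⟩ := clique_bag hpd ⟨s₀, hs₀⟩ hclqS
  obtain ⟨β, hβp, hTβ⟩ := clique_bag hpd ⟨τ₀, hτ₀⟩ hclqT
  rcases le_or_gt α β with hle | hlt
  · exact main B hpd hw α β hle hβp hSα hTβ
  · refine main (fun l => B (p - 1 - l)) (pd_reverse hpd)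
      (fun i hi => hw (p - 1 - i) (by omega)) (p - 1 - α) (p - 1 - β)
      (by omega) (by omega) ?_ ?_
    · have he : p - 1 - (p - 1 - α) = α := by omega
      simp only [he]
      exact hSα
    · have he : p - 1 - (p - 1 - β) = β := by omega
      simp only [he]
      exact hTβ

end L4

end VCR

/-- For a finite graph `G`, a positive integer `k`, and two
disjoint vertex covers `S`, `T` of size at most `k`, the following are
equivalent: (i) there is a reconfiguration sequence from `S` to `T` in
`R_k(G)`; (ii) there is a monotone such sequence; (iii) the graph obtained
from `G` by cliquifying `S` and then cliquifying `T` has a path decomposition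
of width at most `k - 1`. -/
theorem stmt0 {V : Type} [Fintype V] [DecidableEq V] (G : SimpleGraph V)
    (k : ℕ) (hk : 0 < k) (S T : Finset V)
    (hS : IsVC G S) (hT : IsVC G T) (hST : Disjoint S T)
    (hSk : S.card ≤ k) (hTk : T.card ≤ k) :
    List.TFAE
      [ (∃ t Q, ReconfSeq G k S T t Q),
        (∃ t Q, ReconfSeq G k S T t Q ∧ MonotoneSeq t Q),
        (∃ p B, PathDecomp (cliquify (cliquify G S) T) p B ∧ ∀ i < p, (B i).card ≤ k) ] := by
  tfae_have 2 → 1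
  · rintro ⟨t, Q, h, _⟩
    exact ⟨t, Q, h⟩
  tfae_have 1 → 3
  · rintro ⟨t, Q, hQ⟩
    obtain ⟨E, hE⟩ := VCR.goodEnum_of_seq hS hT hST hQ
    exact VCR.pd_of_goodEnum hk hS hT hST hSk hE
  tfae_have 3 → 2
  · intro h
    obtain ⟨E, hE⟩ := VCR.goodEnum_of_pd hS hT hST hSk hTk h
    exact VCR.seq_of_goodEnum hS hT hST hSk hTk hE
  tfae_finish
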